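/- Let q ≥ 7 be a prime and suppose h ≥ 0, l ≥ 0 are integers and m_1, …, m_l ≥ 2 are integers each dividing 6q, satisfying 1/3 = 2h − 2 + Σ_{i=1}^l (1 − 1/m_i). Then either (h, and the multiset {m_i}) is (0; {2,2,3,3}), (0; {2,2,2,6}), (0; {3,6,6}), or q = 7 and it is (0; {2,7,42}). -/

import Mathlib

set_option maxHeartbeats 1000000 in
/-- Riemann–Hurwitz constraint for a group of order 6q, q ≥ 7 prime: the
solutions of 1/3 = 2h − 2 + Σ (1 − 1/m_i) with each m_i ≥ 2 dividing 6q are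
(0; 2,2,3,3), (0; 2,2,2,6), (0; 3,6,6), and for q = 7 also (0; 2,7,42). -/
theorem stmt_19 {q : ℕ} (hq : q.Prime) (hq7 : 7 ≤ q)
    (h l : ℕ) (m : Fin l → ℕ)
    (hm2 : ∀ i, 2 ≤ m i) (hmdvd : ∀ i, m i ∣ 6 * q)
    (heq : (1 : ℚ) / 3 = 2 * (h : ℚ) - 2 + ∑ i, (1 - 1 / (m i : ℚ))) :
    h = 0 ∧
    (Multiset.map m Finset.univ.val = {2, 2, 3, 3} ∨
     Multiset.map m Finset.univ.val = {2, 2, 2, 6} ∨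
     Multiset.map m Finset.univ.val = {3, 6, 6} ∨
     (q = 7 ∧ Multiset.map m Finset.univ.val = {2, 7, 42})) := by
  have hq0 : 0 < q := hq.pos
  have hnd2 : ¬ (2 ∣ q) := by
    intro hd; rcases (hq.eq_one_or_self_of_dvd 2 hd) with h'|h' <;> omega
  have hnd3 : ¬ (3 ∣ q) := by
    intro hd; rcases (hq.eq_one_or_self_of_dvd 3 hd) with h'|h' <;> omega
  have hmQ : ∀ i, (2:ℚ) ≤ (m i : ℚ) := fun i => by exact_mod_cast hm2 i
  have hm0 : ∀ i, (0:ℚ) < (m i : ℚ) := fun i => by linarith [hmQ i]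
  have hinv_le : ∀ i, 1/(m i:ℚ) ≤ 1/2 := fun i => by
    rw [div_le_div_iff₀ (hm0 i) (by norm_num)]; linarith [hmQ i]
  have hinv_pos : ∀ i, (0:ℚ) < 1/(m i:ℚ) := fun i => one_div_pos.2 (hm0 i)
  have hub : ∀ i, (1 - 1/(m i:ℚ)) ≤ 1 := fun i => by linarith [hinv_pos i]
  have hlb : ∀ i, (1:ℚ)/2 ≤ 1 - 1/(m i:ℚ) := fun i => by linarith [hinv_le i]
  have hSlb : (l:ℚ)/2 ≤ ∑ i, (1 - 1/(m i:ℚ)) := by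
    calc (l:ℚ)/2 = ∑ _i : Fin l, (1:ℚ)/2 := by
          rw [Finset.sum_const, Finset.card_univ, Fintype.card_fin, nsmul_eq_mul]; ring
      _ ≤ _ := Finset.sum_le_sum (fun i _ => hlb i)
  have hSub : ∑ i, (1 - 1/(m i:ℚ)) ≤ l := by
    calc ∑ i, (1 - 1/(m i:ℚ)) ≤ ∑ _i : Fin l, (1:ℚ) :=
          Finset.sum_le_sum (fun i _ => hub i)
      _ = l := by simp
  have hS : ∑ i, (1 - 1/(m i:ℚ)) = 7/3 - 2*h := by linarith
  have hSnonneg : (0:ℚ) ≤ ∑ i, (1 - 1/(m i:ℚ)) := le_trans (by positivity) hSlb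
  have hh0 : h = 0 := by
    rcases Nat.eq_zero_or_pos h with h0|h0
    · exact h0
    · exfalso
      have h1 : h = 1 := by
        by_contra hc
        have : (2:ℚ) ≤ (h:ℚ) := by exact_mod_cast (by omega : 2 ≤ h)
        linarith
      subst h1
      norm_num at hS
      have hl0 : l = 0 := by
        by_contra hc
        have : (1:ℚ) ≤ (l:ℚ) := by exact_mod_cast (by omega : 1 ≤ l)
        linarith
      subst hl0
      simp at hS
  subst hh0
  refine ⟨rfl, ?_⟩
  norm_num at hS
  have hl3 : 3 ≤ l := by
    by_contra hc
    have : (l:ℚ) ≤ 2 := by exact_mod_cast (by omega : l ≤ 2)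
    linarith
  have hl4 : l ≤ 4 := by
    by_contra hc
    have : (5:ℚ) ≤ (l:ℚ) := by exact_mod_cast (by omega : 5 ≤ l)
    linarith
  have hsum_inv : ∑ i, (1/(m i:ℚ)) = l - 7/3 := by
    have hh : ∑ i, ((1:ℚ) - 1/(m i:ℚ)) =
        (∑ _i : Fin l, (1:ℚ)) - ∑ i, 1/(m i:ℚ) := Finset.sum_sub_distrib _ _
    simp only [Finset.sum_const, Finset.card_univ, Fintype.card_fin,
      nsmul_eq_mul, mul_one] at hh
    linarith [hh, hS]
  have hcast : ∀ i, ((6*q / m i : ℕ) : ℚ) = (6*(q:ℚ)) / (m i:ℚ) := fun i => by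
    rw [Nat.cast_div (hmdvd i) (Nat.cast_ne_zero.2 (by have := hm2 i; omega))]
    push_cast; ring
  have hclass : ∀ d : ℕ, d ∣ 6*q → 2 ≤ d →
      d = 2 ∨ d = 3 ∨ d = 6 ∨ d = q ∨ d = 2*q ∨ d = 3*q ∨ d = 6*q := by
    intro d hdvd hd2
    by_cases hqd : q ∣ d
    · obtain ⟨e, rfl⟩ := hqd
      have he : e ∣ 6 := by
        have h1 : q * e ∣ q * 6 := by rwa [mul_comm 6 q] at hdvd
        exact (mul_dvd_mul_iff_left (by omega : q ≠ 0)).1 h1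
      have he6 : e ≤ 6 := Nat.le_of_dvd (by norm_num) he
      have he1 : 1 ≤ e := Nat.pos_of_dvd_of_pos he (by norm_num)
      interval_cases e
      · omega
      · omega
      · omega
      · exfalso; norm_num at he
      · exfalso; norm_num at he
      · omega
    · have hco : Nat.Coprime d q := ((Nat.Prime.coprime_iff_not_dvd hq).2 hqd).symm
      have h6 : d ∣ 6 := Nat.Coprime.dvd_of_dvd_mul_right hco hdvd
      have hd6 : d ≤ 6 := Nat.le_of_dvd (by norm_num) h6
      interval_cases d
      · omega
      · omega
      · exfalso; norm_num at h6
      · exfalso; norm_num at h6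
      · omega
  have hd1 : 6*q/2 = 3*q := by omega
  have hd2 : 6*q/3 = 2*q := by omega
  have hd3 : 6*q/6 = q := by omega
  have hd4 : 6*q/q = 6 := Nat.mul_div_cancel 6 hq0
  have hd5 : 6*q/(2*q) = 3 := by
    rw [show 6*q = 3*(2*q) by ring]; exact Nat.mul_div_cancel 3 (by omega)
  have hd6 : 6*q/(3*q) = 2 := by
    rw [show 6*q = 2*(3*q) by ring]; exact Nat.mul_div_cancel 2 (by omega)
  have hd7 : 6*q/(6*q) = 1 := Nat.div_self (by omega)
  have hl34 : l = 3 ∨ l = 4 := by omega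
  rcases hl34 with rfl | rfl
  · -- l = 3
    have hnatQ : ∑ i : Fin 3, ((6*q / m i : ℕ):ℚ) = 4*q := by
      have h1 : ∑ i : Fin 3, ((6*q / m i : ℕ):ℚ)
          = ∑ i : Fin 3, (6*(q:ℚ)) * (1/(m i:ℚ)) :=
        Finset.sum_congr rfl (fun i _ => by rw [hcast i]; ring)
      rw [h1, ← Finset.mul_sum, hsum_inv]; push_cast; ring
    have hnat : ∑ i : Fin 3, 6*q / m i = 4*q := by exact_mod_cast hnatQ
    rw [Fin.sum_univ_three] at hnat
    have hgoal : Multiset.map m Finset.univ.val = {m 0, m 1, m 2} := rfl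
    rw [hgoal]
    rcases hclass (m 0) (hmdvd 0) (hm2 0) with e0|e0|e0|e0|e0|e0|e0 <;>
      rcases hclass (m 1) (hmdvd 1) (hm2 1) with e1|e1|e1|e1|e1|e1|e1 <;>
      rcases hclass (m 2) (hmdvd 2) (hm2 2) with e2|e2|e2|e2|e2|e2|e2 <;>
      rw [e0, e1, e2] at hnat ⊢ <;>
      simp only [hd1, hd2, hd3, hd4, hd5, hd6, hd7] at hnat <;>
      first
        | (exfalso; omega)
        | (right; right; left; decide)
        | (have hq7' : q = 7 := by omega
           subst hq7'
           right; right; right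
           exact ⟨rfl, by decide⟩)
  · -- l = 4
    have h4 := hsum_inv
    rw [Fin.sum_univ_four] at h4
    push_cast at h4
    have key : ∀ i : Fin 4, (1:ℚ)/6 ≤ 1/(m i:ℚ) → m i ≤ 6 := by
      intro i hi
      by_contra hc
      have h7 : (7:ℚ) ≤ (m i:ℚ) := by exact_mod_cast (by omega : 7 ≤ m i)
      have : 1/(m i:ℚ) ≤ 1/7 := by
        rw [div_le_div_iff₀ (hm0 i) (by norm_num)]; linarith
      linarith
    have u0 : m 0 ≤ 6 := key 0 (by linarith [hinv_le 1, hinv_le 2, hinv_le 3])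
    have u1 : m 1 ≤ 6 := key 1 (by linarith [hinv_le 0, hinv_le 2, hinv_le 3])
    have u2 : m 2 ≤ 6 := key 2 (by linarith [hinv_le 0, hinv_le 1, hinv_le 3])
    have u3 : m 3 ≤ 6 := key 3 (by linarith [hinv_le 0, hinv_le 1, hinv_le 2])
    have f0 : m 0 = 2 ∨ m 0 = 3 ∨ m 0 = 6 := by
      rcases hclass (m 0) (hmdvd 0) (hm2 0) with h'|h'|h'|h'|h'|h'|h' <;> omega
    have f1 : m 1 = 2 ∨ m 1 = 3 ∨ m 1 = 6 := by
      rcases hclass (m 1) (hmdvd 1) (hm2 1) with h'|h'|h'|h'|h'|h'|h' <;> omega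
    have f2 : m 2 = 2 ∨ m 2 = 3 ∨ m 2 = 6 := by
      rcases hclass (m 2) (hmdvd 2) (hm2 2) with h'|h'|h'|h'|h'|h'|h' <;> omega
    have f3 : m 3 = 2 ∨ m 3 = 3 ∨ m 3 = 6 := by
      rcases hclass (m 3) (hmdvd 3) (hm2 3) with h'|h'|h'|h'|h'|h'|h' <;> omega
    have hnatQ : ∑ i : Fin 4, ((6*q / m i : ℕ):ℚ) = 10*q := by
      have h1 : ∑ i : Fin 4, ((6*q / m i : ℕ):ℚ)
          = ∑ i : Fin 4, (6*(q:ℚ)) * (1/(m i:ℚ)) :=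
        Finset.sum_congr rfl (fun i _ => by rw [hcast i]; ring)
      rw [h1, ← Finset.mul_sum, hsum_inv]; push_cast; ring
    have hnat : ∑ i : Fin 4, 6*q / m i = 10*q := by exact_mod_cast hnatQ
    rw [Fin.sum_univ_four] at hnat
    have hgoal : Multiset.map m Finset.univ.val = {m 0, m 1, m 2, m 3} := rfl
    rw [hgoal]
    rcases f0 with e0|e0|e0 <;> rcases f1 with e1|e1|e1 <;>
      rcases f2 with e2|e2|e2 <;> rcases f3 with e3|e3|e3 <;>
      rw [e0, e1, e2, e3] at hnat ⊢ <;>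
      simp only [hd1, hd2, hd3] at hnat <;>
      first
        | (exfalso; omega)
        | (left; decide)
        | (right; left; decide)
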